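/- Let X_1, X_2, ... be i.i.d. U[0,1] random variables and let A_n be the event that X_{n+1} becomes a direct neighbour of X_n (i.e., the open interval between X_n and X_{n+1} contains none of X_1,...,X_{n−1}). Then P(A_n infinitely often) = 1. -/

import Mathlib

open MeasureTheory ProbabilityTheory Set
open scoped Classical
open scoped ENNReal

lemma neighbours_slice_bound (n : ℕ) (hn : 1 ≤ n) (y : Fin n → ℝ) :
    ((volume.restrict (Icc (0:ℝ) 1)).prod (volume.restrict (Icc (0:ℝ) 1)))
      {p : ℝ × ℝ | ∃ j : Fin n, 1 ≤ (j:ℕ) ∧ (j:ℕ) ≤ n - 1 ∧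
        y j ∈ Ioo (min p.1 p.2) (max p.1 p.2)} ≤ 1 - ((n:ℝ≥0∞))⁻¹ := by
  set μ : Measure ℝ := volume.restrict (Icc (0:ℝ) 1) with hμ
  haveI : IsProbabilityMeasure μ := ⟨by simp [hμ]⟩
  set r : ℝ → ℕ := fun a => (Finset.univ.filter (fun j : Fin n => 1 ≤ (j:ℕ) ∧ y j < a)).card
    with hrdef
  have hrmeas : Measurable r := by
    have : r = fun a => ∑ j : Fin n, if 1 ≤ (j:ℕ) ∧ y j < a then 1 else 0 := by
      funext a; exact Finset.card_filter _ _
    rw [this]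
    refine Finset.measurable_sum _ fun j _ => Measurable.ite ?_ measurable_const measurable_const
    by_cases h : 1 ≤ (j:ℕ)
    · simp only [h, true_and]
      exact measurableSet_Ioi
    · simp [h]
  have hrlt : ∀ a, r a < n := by
    intro a
    have hne : (Finset.univ.filter (fun j : Fin n => 1 ≤ (j:ℕ) ∧ y j < a)) ≠ Finset.univ := by
      intro h
      have h0 := Finset.mem_univ (⟨0, hn⟩ : Fin n)
      rw [← h] at h0
      simp at h0
    calc r a < Fintype.card (Fin n) := (Finset.card_lt_iff_ne_univ _).mpr hne
    _ = n := Fintype.card_fin n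
  have hsub : ∀ {a b : ℝ}, a ≤ b →
      (Finset.univ.filter (fun j : Fin n => 1 ≤ (j:ℕ) ∧ y j < a)) ⊆
      (Finset.univ.filter (fun j : Fin n => 1 ≤ (j:ℕ) ∧ y j < b)) := by
    intro a b hab
    intro x hx
    simp only [Finset.mem_filter, Finset.mem_univ, true_and] at hx ⊢
    exact ⟨hx.1, lt_of_lt_of_le hx.2 hab⟩
  have hkey : ∀ a b : ℝ, r a = r b → ∀ j : Fin n, 1 ≤ (j:ℕ) →
      y j ∉ Ioo (min a b) (max a b) := by
    intro a b hab j hj hmem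
    obtain ⟨h1, h2⟩ := hmem
    have hlt : r (min a b) < r (max a b) := by
      apply Finset.card_lt_card
      rw [Finset.ssubset_iff_of_subset (hsub min_le_max)]
      refine ⟨j, ?_, ?_⟩
      · simp only [Finset.mem_filter, Finset.mem_univ, true_and]
        exact ⟨hj, h2⟩
      · simp only [Finset.mem_filter, Finset.mem_univ, true_and, not_and, not_lt]
        intro _
        exact le_of_lt h1
    have hminor : r (min a b) = r a ∨ r (min a b) = r b := by
      rcases min_choice a b with h | h <;> [left; right] <;> rw [h]
    have hmaxor : r (max a b) = r a ∨ r (max a b) = r b := by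
      rcases max_choice a b with h | h <;> [left; right] <;> rw [h]
    omega
  set R : ℕ → Set ℝ := fun v => {a | r a = v} with hR
  have hRmeas : ∀ v, MeasurableSet (R v) := fun v => hrmeas (measurableSet_singleton v)
  have hdisj : (↑(Finset.range n) : Set ℕ).Pairwise (Function.onFun Disjoint (fun v => R v)) := by
    intro v _ w _ hvw
    exact Set.disjoint_left.mpr (fun a ha hb => hvw (by rw [← ha, ← hb]))
  have hdisj2 : (↑(Finset.range n) : Set ℕ).Pairwise
      (Function.onFun Disjoint (fun v => R v ×ˢ R v)) := by
    intro v _ w _ hvw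
    exact Set.disjoint_left.mpr (fun p hp hq => hvw (by
      rw [Set.mem_prod] at hp hq
      rw [← hp.1, ← hq.1]))
  have hcover : ∑ v ∈ Finset.range n, μ (R v) = 1 := by
    rw [← measure_biUnion_finset hdisj (fun v _ => hRmeas v)]
    have : ⋃ v ∈ Finset.range n, R v = univ := by
      ext a
      simp only [Set.mem_iUnion, Set.mem_univ, iff_true, Finset.mem_range]
      exact ⟨r a, hrlt a, rfl⟩
    rw [this, measure_univ]
  have hT : (μ.prod μ) (⋃ v ∈ Finset.range n, R v ×ˢ R v) =
      ∑ v ∈ Finset.range n, μ (R v) * μ (R v) := by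
    rw [measure_biUnion_finset hdisj2 (fun v _ => (hRmeas v).prod (hRmeas v))]
    refine Finset.sum_congr rfl fun v _ => ?_
    rw [Measure.prod_prod]
  have hCS : ((n:ℝ≥0∞))⁻¹ ≤ ∑ v ∈ Finset.range n, μ (R v) * μ (R v) := by
    have hfin : ∀ v, μ (R v) ≠ ⊤ := fun v => measure_ne_top μ _
    set c : ℕ → ℝ := fun v => (μ (R v)).toReal with hc
    have hcnn : ∀ v, 0 ≤ c v := fun v => ENNReal.toReal_nonneg
    have hsum : ∑ v ∈ Finset.range n, c v = 1 := by
      rw [hc, ← ENNReal.toReal_sum (fun v _ => hfin v), hcover, ENNReal.toReal_one]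
    have hn' : (0:ℝ) < n := by positivity
    have h2 := sq_sum_le_card_mul_sum_sq (s := Finset.range n) (f := c)
    rw [hsum] at h2
    simp only [Finset.card_range, one_pow] at h2
    have h3 : ((n:ℝ))⁻¹ ≤ ∑ v ∈ Finset.range n, c v ^ 2 := by
      rw [inv_le_iff_one_le_mul₀ hn']
      rw [mul_comm]; exact h2
    calc ((n:ℝ≥0∞))⁻¹ = ENNReal.ofReal ((n:ℝ))⁻¹ := by
          rw [← ENNReal.ofReal_natCast n, ← ENNReal.ofReal_inv_of_pos hn']
    _ ≤ ENNReal.ofReal (∑ v ∈ Finset.range n, c v ^ 2) := ENNReal.ofReal_le_ofReal h3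
    _ = ∑ v ∈ Finset.range n, ENNReal.ofReal (c v ^ 2) :=
        ENNReal.ofReal_sum_of_nonneg (fun v _ => by positivity)
    _ = ∑ v ∈ Finset.range n, μ (R v) * μ (R v) := by
        refine Finset.sum_congr rfl fun v _ => ?_
        rw [sq, ENNReal.ofReal_mul (hcnn v), hc, ENNReal.ofReal_toReal (hfin v)]
  have hTmeas : MeasurableSet (⋃ v ∈ Finset.range n, R v ×ˢ R v) :=
    MeasurableSet.biUnion (Finset.range n).countable_toSet
      (fun v _ => (hRmeas v).prod (hRmeas v))
  have hsubc : {p : ℝ × ℝ | ∃ j : Fin n, 1 ≤ (j:ℕ) ∧ (j:ℕ) ≤ n - 1 ∧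
      y j ∈ Ioo (min p.1 p.2) (max p.1 p.2)} ⊆ (⋃ v ∈ Finset.range n, R v ×ˢ R v)ᶜ := by
    rintro p ⟨j, hj1, _, hj3⟩ hpT
    simp only [Set.mem_iUnion, Finset.mem_range] at hpT
    obtain ⟨v, _, hv⟩ := hpT
    rw [Set.mem_prod] at hv
    have : r p.1 = r p.2 := by rw [hv.1, hv.2]
    exact hkey p.1 p.2 this j hj1 hj3
  calc (μ.prod μ) {p : ℝ × ℝ | ∃ j : Fin n, 1 ≤ (j:ℕ) ∧ (j:ℕ) ≤ n - 1 ∧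
        y j ∈ Ioo (min p.1 p.2) (max p.1 p.2)}
      ≤ (μ.prod μ) ((⋃ v ∈ Finset.range n, R v ×ˢ R v)ᶜ) := measure_mono hsubc
    _ = 1 - (μ.prod μ) (⋃ v ∈ Finset.range n, R v ×ˢ R v) := prob_compl_eq_one_sub hTmeas
    _ ≤ 1 - ((n:ℝ≥0∞))⁻¹ := tsub_le_tsub_left (hT ▸ hCS) 1

lemma neighbours_key_step {Ω : Type*} [MeasureSpace Ω] [IsProbabilityMeasure (ℙ : Measure Ω)]
    (X : ℕ → Ω → ℝ) (hXmeas : ∀ n, Measurable (X n))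
    (hiid : iIndepFun X ℙ)
    (hlaw : ∀ n, Measure.map (X n) ℙ = volume.restrict (Icc (0:ℝ) 1))
    (A : ℕ → Set Ω)
    (hA : ∀ n, A n = {ω | ∀ j, 1 ≤ j → j ≤ n - 1 →
      X j ω ∉ Ioo (min (X n ω) (X (n+1) ω)) (max (X n ω) (X (n+1) ω))})
    (n : ℕ) (hn : 1 ≤ n) (E' : Set (Fin n → ℝ)) (hE' : MeasurableSet E') :
    ℙ ((fun ω (j : Fin n) => X j ω) ⁻¹' E' ∩ (A n)ᶜ) ≤
      (1 - ((n:ℝ≥0∞))⁻¹) * ℙ ((fun ω (j : Fin n) => X j ω) ⁻¹' E') := by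
  have hf : Measurable (fun ω (j : Fin n) => X j ω) :=
    measurable_pi_lambda _ fun j => hXmeas j
  have hg : Measurable (fun ω => (X n ω, X (n+1) ω)) :=
    (hXmeas n).prodMk (hXmeas (n+1))
  -- independence of the first n coordinates from coordinates n, n+1
  have hdisj : Disjoint (Finset.range n) ({n, n+1} : Finset ℕ) := by
    rw [Finset.disjoint_left]
    intro a ha hb
    simp only [Finset.mem_range] at ha
    simp only [Finset.mem_insert, Finset.mem_singleton] at hb
    omega
  have hbase := hiid.indepFun_finset (Finset.range n) {n, n+1} hdisj hXmeas
  have hφ : Measurable (fun (h : (i : (Finset.range n : Finset ℕ)) → ℝ) (j : Fin n) =>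
      h ⟨(j:ℕ), Finset.mem_range.mpr j.isLt⟩) :=
    measurable_pi_lambda _ fun j => measurable_pi_apply _
  have hψ : Measurable (fun (h : (i : ({n, n+1} : Finset ℕ)) → ℝ) =>
      (h ⟨n, by simp⟩, h ⟨n+1, by simp⟩)) :=
    (measurable_pi_apply _).prodMk (measurable_pi_apply _)
  have hfg : IndepFun (fun ω (j : Fin n) => X j ω) (fun ω => (X n ω, X (n+1) ω)) ℙ :=
    hbase.comp hφ hψ
  have hXn : IndepFun (X n) (X (n+1)) ℙ := hiid.indepFun (by omega)
  have hg_law : Measure.map (fun ω => (X n ω, X (n+1) ω)) ℙ =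
      ((volume.restrict (Icc (0:ℝ) 1)).prod (volume.restrict (Icc (0:ℝ) 1))) := by
    have h := (indepFun_iff_map_prod_eq_prod_map_map (hXmeas n).aemeasurable
      (hXmeas (n+1)).aemeasurable).mp hXn
    rw [hlaw n, hlaw (n+1)] at h
    exact h
  have hmap : Measure.map (fun ω => ((fun (j : Fin n) => X j ω), (X n ω, X (n+1) ω))) ℙ =
      (Measure.map (fun ω (j : Fin n) => X j ω) ℙ).prod
        ((volume.restrict (Icc (0:ℝ) 1)).prod (volume.restrict (Icc (0:ℝ) 1))) := by
    rw [← hg_law]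
    exact (indepFun_iff_map_prod_eq_prod_map_map hf.aemeasurable hg.aemeasurable).mp hfg
  set C : Set ((Fin n → ℝ) × (ℝ × ℝ)) := {q | ∃ j : Fin n, 1 ≤ (j:ℕ) ∧ (j:ℕ) ≤ n - 1 ∧
    q.1 j ∈ Ioo (min q.2.1 q.2.2) (max q.2.1 q.2.2)} with hC
  have hCmeas : MeasurableSet C := by
    have hCeq : C = ⋃ j : Fin n, ({q : (Fin n → ℝ) × (ℝ × ℝ) | 1 ≤ (j:ℕ) ∧ (j:ℕ) ≤ n - 1} ∩
        ({q | min q.2.1 q.2.2 < q.1 j} ∩ {q | q.1 j < max q.2.1 q.2.2})) := by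
      ext q
      simp only [hC, Set.mem_setOf_eq, Set.mem_iUnion, Set.mem_inter_iff, Set.mem_Ioo]
      tauto
    rw [hCeq]
    refine MeasurableSet.iUnion fun j => MeasurableSet.inter ?_ (MeasurableSet.inter ?_ ?_)
    · by_cases h : 1 ≤ (j:ℕ) ∧ (j:ℕ) ≤ n-1 <;> simp [h]
    · exact measurableSet_lt (measurable_snd.fst.min measurable_snd.snd)
        (measurable_fst.eval)
    · exact measurableSet_lt (measurable_fst.eval)
        (measurable_snd.fst.max measurable_snd.snd)
  have hAc : (fun ω (j : Fin n) => X j ω) ⁻¹' E' ∩ (A n)ᶜ =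
      (fun ω => ((fun (j : Fin n) => X j ω), (X n ω, X (n+1) ω))) ⁻¹'
        (E' ×ˢ (univ : Set (ℝ × ℝ)) ∩ C) := by
    ext ω
    simp only [hA n, hC, Set.mem_inter_iff, Set.mem_preimage, Set.mem_compl_iff,
      Set.mem_setOf_eq, Set.mem_prod, Set.mem_univ, and_true]
    constructor
    · rintro ⟨hE, hAn⟩
      refine ⟨hE, ?_⟩
      push_neg at hAn
      obtain ⟨j, hj1, hj2, hj3⟩ := hAn
      exact ⟨⟨j, by omega⟩, hj1, hj2, hj3⟩
    · rintro ⟨hE, j, hj1, hj2, hj3⟩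
      exact ⟨hE, fun hAn => hAn j hj1 hj2 hj3⟩
  have hsetmeas : MeasurableSet (E' ×ˢ (univ : Set (ℝ × ℝ)) ∩ C) :=
    (hE'.prod MeasurableSet.univ).inter hCmeas
  rw [hAc, ← Measure.map_apply (hf.prodMk hg) hsetmeas, hmap, Measure.prod_apply hsetmeas]
  have hbound : ∀ y : Fin n → ℝ,
      ((volume.restrict (Icc (0:ℝ) 1)).prod (volume.restrict (Icc (0:ℝ) 1)))
        (Prod.mk y ⁻¹' (E' ×ˢ (univ : Set (ℝ × ℝ)) ∩ C)) ≤
      E'.indicator (fun _ => 1 - ((n:ℝ≥0∞))⁻¹) y := by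
    intro y
    by_cases hy : y ∈ E'
    · rw [Set.indicator_of_mem hy]
      refine le_trans (measure_mono ?_) (neighbours_slice_bound n hn y)
      intro p hp
      simp only [Set.mem_preimage, Set.mem_inter_iff, hC, Set.mem_setOf_eq] at hp
      exact hp.2
    · rw [Set.indicator_of_notMem hy]
      have hempty : Prod.mk y ⁻¹' (E' ×ˢ (univ : Set (ℝ × ℝ)) ∩ C) = ∅ := by
        ext p
        simp [hy]
      rw [hempty]
      simp
  calc ∫⁻ y, ((volume.restrict (Icc (0:ℝ) 1)).prod (volume.restrict (Icc (0:ℝ) 1)))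
        (Prod.mk y ⁻¹' (E' ×ˢ (univ : Set (ℝ × ℝ)) ∩ C))
        ∂(Measure.map (fun ω (j : Fin n) => X j ω) ℙ)
      ≤ ∫⁻ y, E'.indicator (fun _ => 1 - ((n:ℝ≥0∞))⁻¹) y
        ∂(Measure.map (fun ω (j : Fin n) => X j ω) ℙ) := lintegral_mono hbound
    _ = (1 - ((n:ℝ≥0∞))⁻¹) * (Measure.map (fun ω (j : Fin n) => X j ω) ℙ) E' := by
        rw [lintegral_indicator_const hE']
    _ = (1 - ((n:ℝ≥0∞))⁻¹) * ℙ ((fun ω (j : Fin n) => X j ω) ⁻¹' E') := by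
        rw [Measure.map_apply hf hE']

lemma neighbours_cylinder {Ω : Type*} [MeasureSpace Ω]
    (X : ℕ → Ω → ℝ) (A : ℕ → Set Ω)
    (hA : ∀ n, A n = {ω | ∀ j, 1 ≤ j → j ≤ n - 1 →
      X j ω ∉ Ioo (min (X n ω) (X (n+1) ω)) (max (X n ω) (X (n+1) ω))})
    (m n : ℕ) (hmn : m + 2 ≤ n) :
    ∃ C : Set (Fin n → ℝ), MeasurableSet C ∧
      (A m)ᶜ = (fun ω (j : Fin n) => X j ω) ⁻¹' C := by
  refine ⟨{y : Fin n → ℝ | ∃ j : Fin n, 1 ≤ (j:ℕ) ∧ (j:ℕ) ≤ m - 1 ∧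
    y j ∈ Ioo (min (y ⟨m, by omega⟩) (y ⟨m+1, by omega⟩))
      (max (y ⟨m, by omega⟩) (y ⟨m+1, by omega⟩))}, ?_, ?_⟩
  · have hCeq : {y : Fin n → ℝ | ∃ j : Fin n, 1 ≤ (j:ℕ) ∧ (j:ℕ) ≤ m - 1 ∧
        y j ∈ Ioo (min (y ⟨m, by omega⟩) (y ⟨m+1, by omega⟩))
          (max (y ⟨m, by omega⟩) (y ⟨m+1, by omega⟩))} =
        ⋃ j : Fin n, ({y : Fin n → ℝ | 1 ≤ (j:ℕ) ∧ (j:ℕ) ≤ m - 1} ∩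
          ({y | min (y ⟨m, by omega⟩) (y ⟨m+1, by omega⟩) < y j} ∩
           {y | y j < max (y ⟨m, by omega⟩) (y ⟨m+1, by omega⟩)})) := by
      ext y
      simp only [Set.mem_setOf_eq, Set.mem_iUnion, Set.mem_inter_iff, Set.mem_Ioo]
      tauto
    rw [hCeq]
    refine MeasurableSet.iUnion fun j => MeasurableSet.inter ?_ (MeasurableSet.inter ?_ ?_)
    · by_cases h : 1 ≤ (j:ℕ) ∧ (j:ℕ) ≤ m-1 <;> simp [h]
    · exact measurableSet_lt (Measurable.min (measurable_pi_apply _) (measurable_pi_apply _))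
        (measurable_pi_apply j)
    · exact measurableSet_lt (measurable_pi_apply j)
        (Measurable.max (measurable_pi_apply _) (measurable_pi_apply _))
  · ext ω
    simp only [hA m, Set.mem_preimage, Set.mem_compl_iff, Set.mem_setOf_eq]
    constructor
    · intro hAn
      push_neg at hAn
      obtain ⟨j, hj1, hj2, hj3⟩ := hAn
      exact ⟨⟨j, by omega⟩, hj1, hj2, hj3⟩
    · rintro ⟨j, hj1, hj2, hj3⟩ hAn
      exact hAn j hj1 hj2 hj3

/-- Direct neighbours: for i.i.d. `U[0,1]` random variables `X 1, X 2, …`,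
let `A n` be the event that `X (n+1)` becomes a direct neighbour of `X n`,
i.e. the open interval between `X n` and `X (n+1)` contains none of
`X 1, …, X (n−1)`. Then `P(A n infinitely often) = 1`. -/
theorem neighbours_infinitely_often
    {Ω : Type*} [MeasureSpace Ω] [IsProbabilityMeasure (ℙ : Measure Ω)]
    (X : ℕ → Ω → ℝ) (hXmeas : ∀ n, Measurable (X n))
    (hiid : iIndepFun X ℙ)
    (hlaw : ∀ n, Measure.map (X n) ℙ = volume.restrict (Icc (0:ℝ) 1))
    (A : ℕ → Set Ω)
    (hA : ∀ n, A n = {ω | ∀ j, 1 ≤ j → j ≤ n - 1 →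
      X j ω ∉ Ioo (min (X n ω) (X (n+1) ω)) (max (X n ω) (X (n+1) ω))}) :
    ℙ (Filter.limsup A Filter.atTop) = 1 := by
  -- finite product bound
  have main : ∀ N, 1 ≤ N → ∀ K, ℙ (⋂ k ∈ Finset.range (K+1), (A (N+2*k))ᶜ) ≤
      ∏ k ∈ Finset.range (K+1), (1 - (((N+2*k : ℕ)) : ℝ≥0∞)⁻¹) := by
    intro N hN K
    induction K with
    | zero =>
      have h := neighbours_key_step X hXmeas hiid hlaw A hA N hN univ MeasurableSet.univ
      simpa using h
    | succ K ih =>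
      have hn1 : 1 ≤ N + 2*(K+1) := by omega
      have hcyl : ∀ k, k ≤ K → ∃ C : Set (Fin (N + 2*(K+1)) → ℝ), MeasurableSet C ∧
          (A (N+2*k))ᶜ = (fun ω (j : Fin (N + 2*(K+1))) => X j ω) ⁻¹' C :=
        fun k hk => neighbours_cylinder X A hA (N+2*k) (N + 2*(K+1)) (by omega)
      choose Cs hCmeas hCeq using hcyl
      set E' : Set (Fin (N + 2*(K+1)) → ℝ) :=
        ⋂ k ∈ Finset.range (K+1), (if h : k ≤ K then Cs k h else univ) with hE'def
      have hE'meas : MeasurableSet E' := by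
        rw [hE'def]
        refine MeasurableSet.biInter (Finset.range (K+1)).countable_toSet fun k hk => ?_
        have hk' : k < K + 1 := Finset.mem_range.mp (Finset.mem_coe.mp hk)
        rw [dif_pos (by omega)]
        exact hCmeas _ _
      have hE : (⋂ k ∈ Finset.range (K+1), (A (N+2*k))ᶜ) =
          (fun ω (j : Fin (N + 2*(K+1))) => X j ω) ⁻¹' E' := by
        rw [hE'def, Set.preimage_iInter]
        refine Set.iInter_congr fun k => ?_
        rw [Set.preimage_iInter]
        refine Set.iInter_congr fun hk => ?_
        have hk2 : k < K + 1 := by simpa using hk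
        rw [dif_pos (by omega : k ≤ K)]
        exact hCeq k _
      have hsplit : (⋂ k ∈ Finset.range (K+2), (A (N+2*k))ᶜ) =
          ((fun ω (j : Fin (N + 2*(K+1))) => X j ω) ⁻¹' E') ∩ (A (N + 2*(K+1)))ᶜ := by
        rw [show K+2 = (K+1)+1 from rfl, Finset.range_add_one, Finset.set_biInter_insert, ← hE,
          Set.inter_comm]
      rw [hsplit]
      calc ℙ (((fun ω (j : Fin (N + 2*(K+1))) => X j ω) ⁻¹' E') ∩ (A (N + 2*(K+1)))ᶜ)
          ≤ (1 - (((N + 2*(K+1) : ℕ)) : ℝ≥0∞)⁻¹) *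
            ℙ ((fun ω (j : Fin (N + 2*(K+1))) => X j ω) ⁻¹' E') :=
          neighbours_key_step X hXmeas hiid hlaw A hA _ hn1 E' hE'meas
        _ ≤ (1 - (((N + 2*(K+1) : ℕ)) : ℝ≥0∞)⁻¹) *
            ∏ k ∈ Finset.range (K+1), (1 - (((N+2*k : ℕ)) : ℝ≥0∞)⁻¹) := by
            refine mul_le_mul_right ?_ _
            rw [← hE]
            exact ih
        _ = ∏ k ∈ Finset.range (K+2), (1 - (((N+2*k : ℕ)) : ℝ≥0∞)⁻¹) := by
            conv_rhs => rw [Finset.prod_range_succ]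
            exact mul_comm _ _
  -- vanishing of the countable intersections
  have hzero : ∀ N, 1 ≤ N → ℙ (⋂ k : ℕ, (A (N+2*k))ᶜ) = 0 := by
    intro N hN
    have hle : ∀ K, ℙ (⋂ k : ℕ, (A (N+2*k))ᶜ) ≤
        ∏ k ∈ Finset.range (K+1), (1 - (((N+2*k : ℕ)) : ℝ≥0∞)⁻¹) := by
      intro K
      refine le_trans (measure_mono ?_) (main N hN K)
      intro x hx
      simp only [Set.mem_iInter] at hx ⊢
      exact fun k _ => hx k
    have hexp : ∀ K, ∏ k ∈ Finset.range (K+1), (1 - (((N+2*k : ℕ)) : ℝ≥0∞)⁻¹) ≤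
        ENNReal.ofReal (Real.exp (-(∑ k ∈ Finset.range (K+1), (((N+2*k : ℕ)) : ℝ)⁻¹))) := by
      intro K
      have heach : ∀ k ∈ Finset.range (K+1), (1 - (((N+2*k : ℕ)) : ℝ≥0∞)⁻¹) ≤
          ENNReal.ofReal (Real.exp (-((((N+2*k : ℕ)) : ℝ)⁻¹))) := by
        intro k _
        have hm : (0:ℝ) < ((N+2*k : ℕ) : ℝ) := by positivity
        have h1 : (1 - (((N+2*k : ℕ)) : ℝ≥0∞)⁻¹) =
            ENNReal.ofReal (1 - (((N+2*k : ℕ)) : ℝ)⁻¹) := by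
          rw [ENNReal.ofReal_sub _ (by positivity), ENNReal.ofReal_one,
            ← ENNReal.ofReal_natCast (N+2*k), ← ENNReal.ofReal_inv_of_pos hm]
        rw [h1]
        apply ENNReal.ofReal_le_ofReal
        have := Real.add_one_le_exp (-((((N+2*k : ℕ)) : ℝ)⁻¹))
        linarith
      calc ∏ k ∈ Finset.range (K+1), (1 - (((N+2*k : ℕ)) : ℝ≥0∞)⁻¹)
          ≤ ∏ k ∈ Finset.range (K+1),
            ENNReal.ofReal (Real.exp (-((((N+2*k : ℕ)) : ℝ)⁻¹))) :=
          Finset.prod_le_prod' heach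
        _ = ENNReal.ofReal (∏ k ∈ Finset.range (K+1),
            Real.exp (-((((N+2*k : ℕ)) : ℝ)⁻¹))) :=
          (ENNReal.ofReal_prod_of_nonneg (fun k _ => (Real.exp_pos _).le)).symm
        _ = ENNReal.ofReal (Real.exp (-(∑ k ∈ Finset.range (K+1),
            (((N+2*k : ℕ)) : ℝ)⁻¹))) := by
          rw [← Real.exp_sum, Finset.sum_neg_distrib]
    have hdiv : Filter.Tendsto (fun K => ∑ k ∈ Finset.range (K+1), (((N+2*k : ℕ)) : ℝ)⁻¹)
        Filter.atTop Filter.atTop := by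
      have h1 : Filter.Tendsto
          (fun K => (((N:ℝ)+2))⁻¹ * ∑ k ∈ Finset.range (K+1), (1/((k:ℝ)+1)))
          Filter.atTop Filter.atTop := by
        apply Filter.Tendsto.const_mul_atTop (by positivity)
        exact Real.tendsto_sum_range_one_div_nat_succ_atTop.comp
          (Filter.tendsto_add_atTop_nat 1)
      refine Filter.tendsto_atTop_mono ?_ h1
      intro K
      rw [Finset.mul_sum]
      refine Finset.sum_le_sum fun k _ => ?_
      have hk1 : (0:ℝ) < ((N+2*k : ℕ) : ℝ) := by positivity
      rw [one_div, ← mul_inv]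
      apply inv_anti₀ hk1
      push_cast
      nlinarith
    have htend : Filter.Tendsto
        (fun K => ENNReal.ofReal (Real.exp (-(∑ k ∈ Finset.range (K+1),
          (((N+2*k : ℕ)) : ℝ)⁻¹)))) Filter.atTop (nhds 0) := by
      rw [← ENNReal.ofReal_zero]
      apply ENNReal.tendsto_ofReal
      exact Real.tendsto_exp_atBot.comp (Filter.tendsto_neg_atTop_atBot.comp hdiv)
    have hfin : ℙ (⋂ k : ℕ, (A (N+2*k))ᶜ) ≤ 0 :=
      ge_of_tendsto' htend fun K => le_trans (hle K) (hexp K)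
    exact le_antisymm hfin zero_le
  -- complement of limsup is null
  have hlimsup_c : ℙ ((Filter.limsup A Filter.atTop)ᶜ) = 0 := by
    have hrw : (Filter.limsup A Filter.atTop)ᶜ = ⋃ N, ⋂ n, ⋂ (_ : n ≥ N), (A n)ᶜ := by
      ext ω
      simp [Filter.limsup_eq_iInf_iSup_of_nat, Set.mem_iInter, Set.mem_iUnion, not_exists]
    rw [hrw]
    refine measure_iUnion_null fun N => ?_
    refine measure_mono_null ?_ (hzero (max N 1) (le_max_right N 1))
    intro x hx
    simp only [Set.mem_iInter] at hx ⊢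
    intro k
    exact hx (max N 1 + 2*k) (by omega)
  have h1 : (1:ℝ≥0∞) ≤ ℙ (Filter.limsup A Filter.atTop) := by
    have h2 := measure_union_le (μ := ℙ)
      (Filter.limsup A Filter.atTop) (Filter.limsup A Filter.atTop)ᶜ
    rw [Set.union_compl_self, measure_univ, hlimsup_c, add_zero] at h2
    exact h2
  exact le_antisymm prob_le_one h1
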